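/- Fix n ≥ 1 and compositions I, J of n. In the ring ℤ[q,q^{−1}] of Laurent polynomials, let k̃_{I,J}(q,q^{−1}) denote the specialization of the Kostka monomial obtained by substituting t = q^{−1}. Then q^{C(ℓ(J),2)} · k̃_{I,J}(q,q^{−1}) is an ordinary polynomial in q (all its exponents are ≥ 0), and its constant term equals 1 if I = J and 0 if I ≠ J. (This expresses the congruence q^{C(ℓ(J),2)} H̃_J(A;q,q^{−1}) ≡ R_J modulo q·𝓛, where 𝓛 is the ℤ[q]-lattice spanned by the ribbons R_I.) -/

import Mathlib

open Finset

instance {n : ℕ} : DecidableEq (Composition n) := fun a b =>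
  decidable_of_iff (a.blocks = b.blocks) ⟨fun h => Composition.ext h, fun h => congrArg _ h⟩

/-- The descent set of a composition of `n`: the set of proper partial sums
`i₁, i₁+i₂, …, i₁+⋯+i_{ℓ(I)−1}`, a subset of `{1,…,n−1}`. -/
def Des {n : ℕ} (I : Composition n) : Finset ℕ :=
  (Finset.Ioo 0 I.length).image I.sizeUpTo

/-- `d I k` is the number of descents of `I` that are strictly less than `k`. -/
def d {n : ℕ} (I : Composition n) (k : ℕ) : ℕ :=
  ((Des I).filter (· < k)).card

/-- The Kostka monomial specialized at `t = q⁻¹`, as a Laurent polynomial in `q`: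
`k̃_{I,J}(q,q⁻¹) = ∏_{k ∈ Des I} w(J,k)` where `w(J,k) = q^{−(1+d(J,k))}` if `k ∈ Des J`
and `w(J,k) = q^{k−d(J,k)}` otherwise. -/
noncomputable def w {n : ℕ} (J : Composition n) (k : ℕ) : LaurentPolynomial ℤ :=
  if k ∈ Des J then LaurentPolynomial.T (-(1 + (d J k : ℤ)))
  else LaurentPolynomial.T ((k : ℤ) - d J k)

noncomputable def kostkaSpec {n : ℕ} (I J : Composition n) : LaurentPolynomial ℤ :=
  ∏ k ∈ Des I, w J k

/- ### Auxiliary lemmas -/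

lemma T_prod (s : Finset ℕ) (f : ℕ → ℤ) :
    ∏ k ∈ s, (LaurentPolynomial.T (f k) : LaurentPolynomial ℤ) =
      LaurentPolynomial.T (∑ k ∈ s, f k) := by
  induction s using Finset.cons_induction with
  | empty => simp
  | cons a s ha ih => rw [Finset.prod_cons, Finset.sum_cons, ih, ← LaurentPolynomial.T_add]

lemma sum_filter_lt_card (S : Finset ℕ) :
    ∑ k ∈ S, (S.filter (· < k)).card = S.card.choose 2 := by
  induction S using Finset.induction_on_max with
  | empty => simp
  | insert a S hlt ih =>
    have ha : a ∉ S := fun h => lt_irrefl a (hlt a h)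
    rw [Finset.sum_insert ha, Finset.card_insert_of_notMem ha]
    have h1 : (insert a S).filter (· < a) = S := by
      ext x
      simp only [Finset.mem_filter, Finset.mem_insert]
      constructor
      · rintro ⟨rfl | h, hx⟩ <;> [exact absurd hx (lt_irrefl x); exact h]
      · exact fun h => ⟨Or.inr h, hlt x h⟩
    have h2 : ∀ k ∈ S, ((insert a S).filter (· < k)).card = (S.filter (· < k)).card := by
      intro k hk
      congr 1
      ext x
      simp only [Finset.mem_filter, Finset.mem_insert]
      constructor
      · rintro ⟨rfl | h, hx⟩
        · exact absurd (hx.trans (hlt k hk)) (lt_irrefl x)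
        · exact ⟨h, hx⟩
      · exact fun ⟨h, hx⟩ => ⟨Or.inr h, hx⟩
    rw [Finset.sum_congr rfl h2, ih, h1, Nat.choose_succ_succ, Nat.choose_one_right]

lemma sizeUpTo_lt {n : ℕ} (I : Composition n) {i j : ℕ} (hij : i < j) (hj : j ≤ I.length) :
    I.sizeUpTo i < I.sizeUpTo j :=
  lt_of_lt_of_le (I.sizeUpTo_strict_mono (lt_of_lt_of_le hij hj)) (I.monotone_sizeUpTo hij)

lemma card_Des {n : ℕ} (I : Composition n) : (Des I).card = I.length - 1 := by
  have hinj : Set.InjOn I.sizeUpTo (Finset.Ioo 0 I.length) := by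
    intro i hi j hj h
    simp only [Finset.coe_Ioo, Set.mem_Ioo] at hi hj
    rcases lt_trichotomy i j with hlt | he | hlt
    · exact absurd h (ne_of_lt (sizeUpTo_lt I hlt hj.2.le))
    · exact he
    · exact absurd h.symm (ne_of_lt (sizeUpTo_lt I hlt hi.2.le))
  rw [Des, Finset.card_image_of_injOn hinj, Nat.card_Ioo]; omega

lemma Des_pos {n : ℕ} (I : Composition n) {k : ℕ} (hk : k ∈ Des I) : 0 < k := by
  rw [Des, Finset.mem_image] at hk
  obtain ⟨i, hi, rfl⟩ := hk
  rw [Finset.mem_Ioo] at hi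
  have := sizeUpTo_lt I hi.1 hi.2.le
  simpa [Composition.sizeUpTo_zero] using this.trans_le' (le_of_eq (I.sizeUpTo_zero).symm)

lemma d_le {n : ℕ} (J : Composition n) {k : ℕ} : d J k ≤ k - 1 := by
  have h : (Des J).filter (· < k) ⊆ Finset.Ioo 0 k := by
    intro x hx
    rw [Finset.mem_filter] at hx
    exact Finset.mem_Ioo.2 ⟨Des_pos J hx.1, hx.2⟩
  exact le_trans (Finset.card_le_card h) (by rw [Nat.card_Ioo]; omega)

lemma sum_one_add_d {n : ℕ} (J : Composition n) (hl : 1 ≤ J.length) :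
    ∑ k ∈ Des J, (1 + d J k) = J.length.choose 2 := by
  obtain ⟨m, hm⟩ : ∃ m, J.length = m + 1 := ⟨J.length - 1, by omega⟩
  have hc : (Des J).card = m := by rw [card_Des, hm]; omega
  rw [Finset.sum_add_distrib, Finset.sum_const, smul_eq_mul, mul_one]
  simp only [d]
  rw [sum_filter_lt_card, hc, hm, Nat.choose_succ_succ, Nat.choose_one_right]

lemma boundary_val {n : ℕ} (I : Composition n) (i : Fin (I.length + 1)) :
    ((I.boundary.toEmbedding i : Fin (n+1)) : ℕ) = I.sizeUpTo i := rfl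

lemma mem_boundaries_iff {n : ℕ} (I : Composition n) (x : Fin (n+1)) :
    x ∈ I.boundaries ↔ ((x : ℕ) = 0 ∨ (x : ℕ) = n ∨ (x : ℕ) ∈ Des I) := by
  rw [Composition.boundaries, Finset.mem_map]
  constructor
  · rintro ⟨i, -, rfl⟩
    rcases Nat.eq_zero_or_pos i.val with h0 | hpos
    · left; rw [boundary_val, h0, Composition.sizeUpTo_zero]
    rcases eq_or_lt_of_le (Nat.lt_succ_iff.mp i.2) with hlen | hlt
    · right; left; rw [boundary_val, hlen, I.sizeUpTo_length]
    · right; right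
      rw [boundary_val, Des, Finset.mem_image]
      exact ⟨i, Finset.mem_Ioo.2 ⟨hpos, hlt⟩, rfl⟩
  · rintro (h0 | hn | hd)
    · exact ⟨0, Finset.mem_univ _,
        Fin.ext (by rw [boundary_val, Fin.val_zero, Composition.sizeUpTo_zero, h0])⟩
    · exact ⟨Fin.last I.length, Finset.mem_univ _,
        Fin.ext (by rw [boundary_val, Fin.val_last, I.sizeUpTo_length, hn])⟩
    · rw [Des, Finset.mem_image] at hd
      obtain ⟨i, hi, hx⟩ := hd
      rw [Finset.mem_Ioo] at hi
      exact ⟨⟨i, Nat.lt_succ_of_lt hi.2⟩, Finset.mem_univ _,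
        Fin.ext (by rw [boundary_val]; exact hx)⟩

lemma cas_ext {n : ℕ} {a b : CompositionAsSet n} (h : a.boundaries = b.boundaries) : a = b := by
  cases a; cases b; simpa using h

lemma des_inj {n : ℕ} {I J : Composition n} (h : Des I = Des J) : I = J := by
  have hb : I.boundaries = J.boundaries := by
    ext x
    rw [mem_boundaries_iff, mem_boundaries_iff, h]
  exact (compositionEquiv n).injective (cas_ext (by
    show I.toCompositionAsSet.boundaries = J.toCompositionAsSet.boundaries
    rwa [Composition.toCompositionAsSet_boundaries, Composition.toCompositionAsSet_boundaries]))

/-- `q^{C(ℓ(J),2)} · k̃_{I,J}(q,q⁻¹)` is an ordinary polynomial in `q`, whose constant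
term is `1` if `I = J` and `0` otherwise. -/
theorem kostkaSpec_polynomial_constantCoeff {n : ℕ} (hn : 1 ≤ n)
    (I J : Composition n) :
    ∃ p : Polynomial ℤ,
      Polynomial.toLaurent p =
        LaurentPolynomial.T (Nat.choose J.length 2 : ℤ) * kostkaSpec I J ∧
      p.coeff 0 = if I = J then 1 else 0 := by
  classical
  have hl : 1 ≤ J.length := J.length_pos_of_pos hn
  set C : ℕ := J.length.choose 2 with hC
  have hkost : kostkaSpec I J =
      LaurentPolynomial.T (∑ k ∈ Des I,
        if k ∈ Des J then -(1 + (d J k : ℤ)) else (k : ℤ) - d J k) := by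
    rw [kostkaSpec, ← T_prod]
    refine Finset.prod_congr rfl fun k _ => ?_
    rw [w]
    split_ifs <;> rfl
  set e : ℤ := (C : ℤ) + ∑ k ∈ Des I,
    (if k ∈ Des J then -(1 + (d J k : ℤ)) else (k : ℤ) - d J k) with he
  have hTmul : LaurentPolynomial.T (C : ℤ) * kostkaSpec I J = LaurentPolynomial.T e := by
    rw [hkost, ← LaurentPolynomial.T_add]
  set S₁ : Finset ℕ := (Des I).filter (· ∈ Des J) with hS₁
  set S₂ : Finset ℕ := (Des I).filter (fun k => k ∉ Des J) with hS₂
  have hsplit : ∑ k ∈ Des I,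
      (if k ∈ Des J then -(1 + (d J k : ℤ)) else (k : ℤ) - d J k) =
      -((∑ k ∈ S₁, (1 + d J k) : ℕ) : ℤ) + ∑ k ∈ S₂, ((k : ℤ) - d J k) := by
    rw [← Finset.sum_filter_add_sum_filter_not (Des I) (· ∈ Des J)]
    congr 1
    · rw [Nat.cast_sum, ← Finset.sum_neg_distrib]
      refine Finset.sum_congr rfl fun k hk => ?_
      rw [Finset.mem_filter] at hk
      simp [hk.2]
    · refine Finset.sum_congr rfl fun k hk => ?_
      rw [Finset.mem_filter] at hk
      simp [hk.2]
  set A : ℕ := ∑ k ∈ S₁, (1 + d J k) with hA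
  set B : ℤ := ∑ k ∈ S₂, ((k : ℤ) - d J k) with hB
  have hsub : S₁ ⊆ Des J := fun x hx => (Finset.mem_filter.1 hx).2
  have hAC : A ≤ C := by
    rw [hA, hC, ← sum_one_add_d J hl]
    exact Finset.sum_le_sum_of_subset hsub
  have hAC' : (A : ℤ) ≤ C := by exact_mod_cast hAC
  have hBpos : ∀ k ∈ S₂, (1 : ℤ) ≤ (k : ℤ) - d J k := by
    intro k hk
    rw [Finset.mem_filter] at hk
    have h1 : 0 < k := Des_pos I hk.1
    have h2 : d J k ≤ k - 1 := d_le J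
    omega
  have hB0 : 0 ≤ B := Finset.sum_nonneg fun k hk => le_trans zero_le_one (hBpos k hk)
  by_cases hIJ : I = J
  · have hDes : Des I = Des J := by rw [hIJ]
    have hS₁' : S₁ = Des J := by
      rw [hS₁, hDes, Finset.filter_true_of_mem (fun x hx => hx)]
    have hS₂e : S₂ = ∅ := by
      rw [hS₂, hDes]
      exact Finset.filter_false_of_mem (fun x hx h => h hx)
    have hA' : A = C := by rw [hA, hS₁', hC, sum_one_add_d J hl]
    have hB' : B = 0 := by rw [hB, hS₂e, Finset.sum_empty]
    have he' : e = 0 := by rw [he, hsplit, hA', hB']; ring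
    refine ⟨1, ?_, by simp [hIJ]⟩
    rw [map_one, hTmul, he', LaurentPolynomial.T_zero]
  · have hne : Des I ≠ Des J := fun h => hIJ (des_inj h)
    have he1 : 1 ≤ e := by
      by_cases hS2 : S₂.Nonempty
      · have hcard : (S₂.card : ℤ) ≤ B := by
          rw [hB]
          calc (S₂.card : ℤ) = ∑ _k ∈ S₂, 1 := by simp
          _ ≤ _ := Finset.sum_le_sum hBpos
        have hc1 : 1 ≤ S₂.card := Finset.card_pos.2 hS2
        have hc1' : (1 : ℤ) ≤ S₂.card := by exact_mod_cast hc1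
        rw [he, hsplit]
        linarith
      · have hS₂e : S₂ = ∅ := Finset.not_nonempty_iff_eq_empty.1 hS2
        have hsubI : Des I ⊆ Des J := by
          intro x hx
          by_contra hxJ
          exact Finset.notMem_empty x (hS₂e ▸ Finset.mem_filter.2 ⟨hx, hxJ⟩)
        have hS₁'' : S₁ = Des I := by
          rw [hS₁, Finset.filter_true_of_mem (fun x hx => hsubI hx)]
        obtain ⟨x, hxJ, hxI⟩ : ∃ x ∈ Des J, x ∉ Des I := by
          by_contra hcon
          push_neg at hcon
          exact hne (Finset.Subset.antisymm hsubI hcon)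
        have hAlt : A + 1 ≤ C := by
          have hins : insert x (Des I) ⊆ Des J := Finset.insert_subset hxJ hsubI
          have hsum := Finset.sum_le_sum_of_subset (f := fun k => 1 + d J k) hins
          rw [Finset.sum_insert hxI, sum_one_add_d J hl] at hsum
          rw [hA, hS₁'', hC]
          omega
        have hB' : B = 0 := by rw [hB, hS₂e, Finset.sum_empty]
        have hAlt' : (A : ℤ) + 1 ≤ C := by exact_mod_cast hAlt
        rw [he, hsplit]
        linarith
    refine ⟨Polynomial.X ^ e.toNat, ?_, ?_⟩
    · rw [hTmul, Polynomial.toLaurent_X_pow, Int.toNat_of_nonneg (by linarith)]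
    · rw [Polynomial.coeff_X_pow, if_neg hIJ, if_neg (by omega)]
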